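/- In the algebra A_n(Σ)⁰ with generators X_{ij,γ} (1 ≤ i ≠ j ≤ n, γ ∈ π := π_1(Σ)) subject to X_{ij,γ} = X_{ji,γ⁻¹}, the conjugation action relations μ_i X_{ij,γ} μ_i⁻¹ = X_{ij,μγ}, μ_l X_{ij,γ} μ_l⁻¹ = X_{ij,γ} for l ≠ i, j, and the relations [X_{ij,e}, X_{kl,e}] = 0 (i,j,k,l distinct) and [X_{ij,e}, X_{jk,e} + X_{ik,e}] = 0 (i,j,k distinct) imposed as a module ideal over Λ_n = ⊕_j ℤπ, the following hold for all γ, δ ∈ π: [X_{ij,γ}, X_{kl,δ}] = 0 for i, j, k, l distinct, and [X_{ij,γ}, X_{jk,δ} + X_{ik,γδ}] = 0 for i, j, k distinct. -/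
import Mathlib


/-- In the algebra `A_n(Σ)⁰` — modeled here as a ring `A` with elements `X_{ij,γ}`
subject to `X_{ij,γ} = X_{ji,γ⁻¹}`, equipped with the conjugation action of `π^n` by
ring automorphisms (`μ_i · X_{ij,γ} = X_{ij,μγ}`, `μ_j · X_{ij,γ} = X_{ij,γμ⁻¹}`,
`μ_l · X_{ij,γ} = X_{ij,γ}` for `l ∉ {i,j}`), where the untwisted 4-term relations
hold — the twisted 4-term relations hold for all `γ, δ ∈ π`. -/
theorem stmt17 {A : Type*} [Ring A] {π : Type*} [Group π] {n : ℕ}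
    (X : Fin n → Fin n → π → A)
    (act : Fin n → π → A ≃+* A)
    (hsym : ∀ (i j : Fin n) (γ : π), i ≠ j → X i j γ = X j i γ⁻¹)
    (hact₁ : ∀ (i j : Fin n) (γ μ : π), i ≠ j → act i μ (X i j γ) = X i j (μ * γ))
    (hact₂ : ∀ (i j : Fin n) (γ μ : π), i ≠ j → act j μ (X i j γ) = X i j (γ * μ⁻¹))
    (hact₃ : ∀ (i j l : Fin n) (γ μ : π), i ≠ j → l ≠ i → l ≠ j →
      act l μ (X i j γ) = X i j γ)
    (hbase₄ : ∀ i j k l : Fin n, i ≠ j → i ≠ k → i ≠ l → j ≠ k → j ≠ l → k ≠ l →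
      X i j 1 * X k l 1 - X k l 1 * X i j 1 = 0)
    (hbase₃ : ∀ i j k : Fin n, i ≠ j → i ≠ k → j ≠ k →
      X i j 1 * (X j k 1 + X i k 1) - (X j k 1 + X i k 1) * X i j 1 = 0) :
    (∀ (i j k l : Fin n) (γ δ : π),
        i ≠ j → i ≠ k → i ≠ l → j ≠ k → j ≠ l → k ≠ l →
      X i j γ * X k l δ - X k l δ * X i j γ = 0) ∧
    (∀ (i j k : Fin n) (γ δ : π), i ≠ j → i ≠ k → j ≠ k →
      X i j γ * (X j k δ + X i k (γ * δ)) - (X j k δ + X i k (γ * δ)) * X i j γ = 0) := by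
  constructor
  · intro i j k l γ δ hij hik hil hjk hjl hkl
    have h := congrArg (act k δ) (congrArg (act i γ) (hbase₄ i j k l hij hik hil hjk hjl hkl))
    simpa only [map_sub, map_mul, map_zero, hact₁ i j 1 γ hij,
      hact₃ k l i 1 γ hkl hik hil, hact₁ k l 1 δ hkl,
      hact₃ i j k γ δ hij hik.symm hjk.symm, mul_one] using h
  · intro i j k γ δ hij hik hjk
    have h := congrArg (act k δ⁻¹) (congrArg (act i γ) (hbase₃ i j k hij hik hjk))
    simpa only [map_sub, map_mul, map_add, map_zero, hact₁ i j 1 γ hij,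
      hact₃ j k i 1 γ hjk hij hik, hact₁ i k 1 γ hik,
      hact₃ i j k γ δ⁻¹ hij hik.symm hjk.symm, hact₂ j k 1 δ⁻¹ hjk,
      hact₂ i k γ δ⁻¹ hik, inv_inv, mul_one, one_mul] using h
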